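/- If P₁,…,P_K are i.i.d. uniform on [0,1], then the Simes statistic S_K(P) = min_k (K/k)·P_(k) is itself uniformly distributed on [0,1]. -/

import Mathlib

open MeasureTheory ProbabilityTheory Finset
open scoped ENNReal Classical

noncomputable section

/-- The `i`-th smallest value (0-indexed) among `p 0, …, p (K-1)`. -/
def sortAsc {K : ℕ} (p : Fin K → ℝ) : Fin K → ℝ := p ∘ Tuple.sort p

/-- The `i`-th largest value (0-indexed) among `e 0, …, e (K-1)`. -/
def sortDesc {K : ℕ} (e : Fin K → ℝ) : Fin K → ℝ := e ∘ Tuple.sort (fun j => -e j)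

/-- `k* = max {k : K p_(k) / k ≤ α}` (with `max ∅ = 0`), the BH rejection count. -/
def bhCount (K : ℕ) (α : ℝ) (p : Fin K → ℝ) : ℕ :=
  (univ.filter (fun i : Fin K => (K : ℝ) * sortAsc p i / (i.1 + 1) ≤ α)).sup
    (fun i => i.1 + 1)

/-- The BH procedure rejects the hypotheses carrying the `k*` smallest p-values. -/
def bhRejects (K : ℕ) (α : ℝ) (p : Fin K → ℝ) : Finset (Fin K) :=
  univ.filter (fun k => ∃ i : Fin K, i.1 + 1 ≤ bhCount K α p ∧ p k ≤ sortAsc p i)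

/-- `k* = max {k : k e_[k] / K ≥ 1/α}`, the e-BH rejection count. -/
def ebhCount (K : ℕ) (α : ℝ) (e : Fin K → ℝ) : ℕ :=
  (univ.filter (fun i : Fin K => 1 / α ≤ (i.1 + 1) * sortDesc e i / K)).sup
    (fun i => i.1 + 1)

/-- The e-BH procedure rejects the hypotheses carrying the `k*` largest e-values. -/
def ebhRejects (K : ℕ) (α : ℝ) (e : Fin K → ℝ) : Finset (Fin K) :=
  univ.filter (fun k => ∃ i : Fin K, i.1 + 1 ≤ ebhCount K α e ∧ sortDesc e i ≤ e k)

/-- Simes function `S_K(p) = min_k (K/k) p_(k)`. -/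
def simes (K : ℕ) (p : Fin K → ℝ) : ℝ := ⨅ i : Fin K, (K : ℝ) / (i.1 + 1) * sortAsc p i

/-- Harmonic number `ℓ_K = ∑_{k=1}^K 1/k`. -/
def harm (K : ℕ) : ℝ := ∑ k ∈ Finset.Icc 1 K, (1 : ℝ) / k

/-- An increasing (upper) subset of `ℝ^K`. -/
def IncreasingSet {K : ℕ} (A : Set (Fin K → ℝ)) : Prop := ∀ x ∈ A, ∀ y, x ≤ y → y ∈ A

/-- Positive regression dependence on the subset `N` of nulls. -/
def PRDS {Ω : Type*} [MeasurableSpace Ω] (μ : Measure Ω) {K : ℕ}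
    (P : Fin K → Ω → ℝ) (N : Finset (Fin K)) : Prop :=
  ∀ k ∈ N, ∀ A : Set (Fin K → ℝ), MeasurableSet A → IncreasingSet A →
    Monotone (fun x : ℝ => μ[|{ω | P k ω ≤ x}] {ω | (fun j => P j ω) ∈ A})

/-- False discovery proportion of a rejection set `D` w.r.t. the null set `N`. -/
def fdp {K : ℕ} (D N : Finset (Fin K)) : ℝ := ((D ∩ N).card : ℝ) / (max D.card 1 : ℕ)

end

noncomputable section
namespace SimesAux

def cnt {n : ℕ} (u : Fin n → ℝ) (c : ℝ) : ℕ := (univ.filter fun j => u j ≤ c).card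

lemma cnt_eq_sum {n : ℕ} (u : Fin n → ℝ) (c : ℝ) :
    cnt u c = ∑ j, if u j ≤ c then 1 else 0 := by
  rw [cnt, Finset.card_filter]

lemma measurable_cnt {n : ℕ} (c : ℝ) : Measurable fun u : Fin n → ℝ => cnt u c := by
  simp only [cnt_eq_sum]
  exact Finset.measurable_sum _ fun j _ =>
    Measurable.ite (measurableSet_le (measurable_pi_apply j) measurable_const)
      measurable_const measurable_const

def goodSet (n : ℕ) (b : ℝ) : Set (Fin n → ℝ) :=
  {u | ∀ i : Fin n, cnt u ((i.1 + 1) * b) ≤ i.1}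

lemma measurableSet_goodSet (n : ℕ) (b : ℝ) : MeasurableSet (goodSet n b) := by
  have : goodSet n b = ⋂ i : Fin n, (fun u => cnt u ((i.1 + 1) * b)) ⁻¹' Set.Iic i.1 := by
    ext u; simp [goodSet]
  rw [this]
  exact MeasurableSet.iInter fun i => (measurable_cnt _) measurableSet_Iic

lemma cnt_succAbove {n : ℕ} (u : Fin (n + 1) → ℝ) (i : Fin (n + 1)) (c : ℝ) :
    cnt u c = (if u i ≤ c then 1 else 0) + cnt (fun j => u (i.succAbove j)) c := by
  simp only [cnt_eq_sum]
  exact Fin.sum_univ_succAbove (fun j => if u j ≤ c then 1 else 0) i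

lemma pi_restrict {n : ℕ} (ν : Fin n → Measure ℝ) [∀ i, SigmaFinite (ν i)]
    (t : Fin n → Set ℝ) (hts : ∀ i, MeasurableSet (t i)) :
    (Measure.pi ν).restrict (Set.pi Set.univ t) = Measure.pi (fun i => (ν i).restrict (t i)) := by
  refine (Measure.pi_eq fun s hs => ?_).symm
  rw [Measure.restrict_apply (MeasurableSet.univ_pi hs), ← Set.pi_inter_distrib,
    Measure.pi_pi]
  exact Finset.prod_congr rfl fun i _ => (Measure.restrict_apply (hs i)).symm

lemma hyperplane_null {n : ℕ} (ν : Measure ℝ) [SigmaFinite ν] [NullSingletonClass ν]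
    (i j : Fin (n + 1)) (hij : i ≠ j) :
    Measure.pi (fun _ : Fin (n + 1) => ν) {u | u i = u j} = 0 := by
  obtain ⟨j', hj'⟩ := Fin.exists_succAbove_eq (Ne.symm hij)
  have hmp := measurePreserving_piFinSuccAbove (fun _ : Fin (n + 1) => ν) i
  set e := MeasurableEquiv.piFinSuccAbove (fun _ : Fin (n + 1) => ℝ) i
  have hpre : {u : Fin (n + 1) → ℝ | u i = u j} = e ⁻¹' {p | p.1 = p.2 j'} := by
    ext u
    simp only [Set.mem_preimage, Set.mem_setOf_eq, e, MeasurableEquiv.piFinSuccAbove,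
      MeasurableEquiv.coe_mk, Equiv.symm_symm]
    rw [← hj']
    rfl
  have hB : MeasurableSet {p : ℝ × (Fin n → ℝ) | p.1 = p.2 j'} :=
    measurableSet_eq_fun measurable_fst ((measurable_pi_apply j').comp measurable_snd)
  rw [hpre, hmp.measure_preimage hB.nullMeasurableSet]
  rw [Measure.prod_apply hB]
  have hzero : ∀ t : ℝ,
      Measure.pi (fun _ : Fin n => ν) (Prod.mk t ⁻¹' {p : ℝ × (Fin n → ℝ) | p.1 = p.2 j'}) = 0 := by
    intro t
    have hsub : (Prod.mk t ⁻¹' {p : ℝ × (Fin n → ℝ) | p.1 = p.2 j'}) ⊆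
        Set.pi Set.univ (fun l => if l = j' then ({t} : Set ℝ) else Set.univ) := by
      intro v hv
      simp only [Set.mem_preimage, Set.mem_setOf_eq] at hv
      intro l _
      by_cases hl : l = j'
      · subst hl; simp [← hv]
      · simp [hl]
    refine le_antisymm ?_ zero_le
    refine (measure_mono hsub).trans ?_
    rw [Measure.pi_pi]
    rw [Finset.prod_eq_zero (Finset.mem_univ j')]
    simp
  simp only [hzero]
  simp

/-- The core Daniels-type computation. -/
lemma core : ∀ (n : ℕ) (b s : ℝ), 0 ≤ b → ((n : ℝ) + 1) * b ≤ s →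
    Measure.pi (fun _ : Fin (n + 1) => volume.restrict (Set.Icc (0:ℝ) s)) (goodSet (n + 1) b)
      = ENNReal.ofReal (s ^ n * (s - ((n : ℝ) + 1) * b)) := by
  intro n
  induction n with
  | zero =>
    intro b s hb hbs
    have hset : goodSet 1 b = Set.pi Set.univ (fun _ : Fin 1 => Set.Ioi b) := by
      ext u
      simp only [goodSet, Set.mem_setOf_eq, Set.mem_pi, Set.mem_univ, forall_const,
        Set.mem_Ioi]
      constructor
      · intro h j
        have h0 := h 0
        simp only [Fin.val_zero, Nat.le_zero, Nat.cast_zero, zero_add, one_mul] at h0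
        have hj0 : j = 0 := Subsingleton.elim _ _
        subst hj0
        by_contra hle
        push_neg at hle
        have hmem : (0 : Fin 1) ∈ univ.filter fun j : Fin 1 => u j ≤ b := by
          simp [hle]
        have hpos : 0 < cnt u b := by
          rw [cnt]; exact Finset.card_pos.2 ⟨0, hmem⟩
        omega
      · intro h i
        have : (univ.filter fun j : Fin 1 => u j ≤ (↑i.1 + 1) * b) = ∅ := by
          refine Finset.filter_eq_empty_iff.2 fun j _ => ?_
          have hj0 : j = 0 := Subsingleton.elim _ _
          have hi0 : i = 0 := Subsingleton.elim _ _
          subst hj0; subst hi0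
          simp only [Fin.val_zero, Nat.cast_zero, zero_add, one_mul]
          exact not_le.2 (h 0)
        rw [cnt, this]
        simp
    rw [hset, Measure.pi_pi]
    have : Set.Ioi b ∩ Set.Icc 0 s = Set.Ioc b s := by
      ext x
      simp only [Set.mem_inter_iff, Set.mem_Ioi, Set.mem_Icc, Set.mem_Ioc]
      constructor
      · rintro ⟨h1, _, h3⟩; exact ⟨h1, h3⟩
      · rintro ⟨h1, h2⟩; exact ⟨h1, hb.trans h1.le, h2⟩
    simp only [Finset.prod_const, Finset.card_univ, Fintype.card_fin, pow_one]
    rw [Measure.restrict_apply measurableSet_Ioi, this, Real.volume_Ioc]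
    norm_num
  | succ n IH =>
    intro b s hb hbs
    have hb2 : ((n : ℝ) + 2) * b ≤ s := by push_cast at hbs ⊢; linarith
    have ha0 : (0:ℝ) ≤ ((n : ℝ) + 2) * b := by positivity
    have hs0 : (0:ℝ) ≤ s := le_trans ha0 hb2
    set ν := volume.restrict (Set.Icc (0:ℝ) s) with hν
    haveI hfin : IsFiniteMeasure ν := ⟨by
      rw [hν, Measure.restrict_apply_univ]
      simp [Real.volume_Icc]⟩
    set A : Fin (n + 2) → Set (Fin (n + 2) → ℝ) :=
      fun i => {u | (∀ j, j ≠ i → u j < u i) ∧ u ∈ goodSet (n + 2) b} with hA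
    have hAmeas : ∀ i, MeasurableSet (A i) := by
      intro i
      have : A i = (⋂ j, ⋂ (_ : j ≠ i), {u : Fin (n+2) → ℝ | u j < u i}) ∩ goodSet (n + 2) b := by
        ext u; simp [hA, Set.mem_iInter]
      rw [this]
      exact MeasurableSet.inter
        (MeasurableSet.iInter fun j => MeasurableSet.iInter fun _ =>
          measurableSet_lt (measurable_pi_apply j) (measurable_pi_apply i))
        (measurableSet_goodSet _ _)
    have hAdisj : Pairwise (Function.onFun Disjoint A) := by
      intro i i' hii'
      refine Set.disjoint_left.2 fun u hu hu' => ?_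
      exact absurd (hu'.1 i hii') (not_lt.2 (hu.1 i' hii'.symm).le)
    have hGmeas := measurableSet_goodSet (n + 2) b
    set μpi := Measure.pi (fun _ : Fin (n + 2) => ν) with hμpi
    have hsub : (⋃ i, A i) ⊆ goodSet (n + 2) b := Set.iUnion_subset fun i u hu => hu.2
    have hcover : goodSet (n + 2) b ⊆ (⋃ i, A i) ∪
        (⋃ p : Fin (n+2) × Fin (n+2), ⋃ (_ : p.1 ≠ p.2), {u : Fin (n+2) → ℝ | u p.1 = u p.2}) := by
      intro u hu
      obtain ⟨i₀, hi₀⟩ := Finite.exists_max u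
      by_cases hmax : ∀ j, j ≠ i₀ → u j < u i₀
      · exact Or.inl (Set.mem_iUnion.2 ⟨i₀, hmax, hu⟩)
      · push_neg at hmax
        obtain ⟨j, hj, hj2⟩ := hmax
        refine Or.inr (Set.mem_iUnion.2 ⟨(j, i₀), ?_⟩)
        refine Set.mem_iUnion.2 ⟨hj, ?_⟩
        exact le_antisymm (hi₀ j) hj2
    have hnull : μpi (⋃ p : Fin (n+2) × Fin (n+2), ⋃ (_ : p.1 ≠ p.2),
        {u : Fin (n+2) → ℝ | u p.1 = u p.2}) = 0 := by
      refine measure_iUnion_null fun p => ?_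
      by_cases hp : p.1 = p.2
      · simp [hp]
      · have : (⋃ (_ : p.1 ≠ p.2), {u : Fin (n+2) → ℝ | u p.1 = u p.2})
            = {u : Fin (n+2) → ℝ | u p.1 = u p.2} := by
          ext u; simp [hp]
        rw [this]
        exact hyperplane_null ν p.1 p.2 hp
    have hGA : μpi (goodSet (n + 2) b) = μpi (⋃ i, A i) := by
      refine le_antisymm ?_ (measure_mono hsub)
      calc μpi (goodSet (n + 2) b) ≤ μpi ((⋃ i, A i) ∪ _) := measure_mono hcover
      _ ≤ μpi (⋃ i, A i) + _ := measure_union_le _ _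
      _ = μpi (⋃ i, A i) := by rw [hnull, add_zero]
    have hAi : ∀ i : Fin (n + 2),
        μpi (A i) = ENNReal.ofReal (s ^ (n + 2) / ((n:ℝ) + 2) - b * s ^ (n + 1)) := by
      intro i
      have hmp := measurePreserving_piFinSuccAbove (fun _ : Fin (n + 2) => ν) i
      set B : Set (ℝ × (Fin (n + 1) → ℝ)) :=
        {p | ((n:ℝ) + 2) * b < p.1 ∧ (∀ j, p.2 j < p.1) ∧ p.2 ∈ goodSet (n + 1) b} with hBdef
      have hBmeas : MeasurableSet B := by
        refine MeasurableSet.inter (measurableSet_lt measurable_const measurable_fst) ?_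
        refine MeasurableSet.inter ?_ ((measurableSet_goodSet (n+1) b).preimage measurable_snd)
        show MeasurableSet {p : ℝ × (Fin (n + 1) → ℝ) | ∀ j, p.2 j < p.1}
        have : {p : ℝ × (Fin (n + 1) → ℝ) | ∀ j, p.2 j < p.1} =
            ⋂ j, {p : ℝ × (Fin (n + 1) → ℝ) | p.2 j < p.1} := by
          ext p; simp
        rw [this]
        exact MeasurableSet.iInter fun j =>
          measurableSet_lt (measurable_snd.eval) measurable_fst
      have hpre : A i = (MeasurableEquiv.piFinSuccAbove (fun _ : Fin (n+2) => ℝ) i) ⁻¹' B := by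
        ext u
        have happ : (MeasurableEquiv.piFinSuccAbove (fun _ : Fin (n+2) => ℝ) i) u
            = (u i, fun j => u (i.succAbove j)) := rfl
        simp only [Set.mem_preimage, happ, hBdef, Set.mem_setOf_eq, hA]
        constructor
        · rintro ⟨hmax, hg⟩
          have hlast := hg (Fin.last (n + 1))
          have hlv : ((Fin.last (n+1)).1 : ℝ) + 1 = (n:ℝ) + 2 := by
            simp [Fin.last]; push_cast; ring
          rw [hlv] at hlast
          have ht : ((n:ℝ) + 2) * b < u i := by
            by_contra hti
            push_neg at hti
            have hall : ∀ j, u j ≤ ((n:ℝ) + 2) * b := by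
              intro j
              by_cases hj : j = i
              · subst hj; exact hti
              · exact ((hmax j hj).le).trans hti
            have : cnt u (((n:ℝ) + 2) * b) = n + 2 := by
              rw [cnt, Finset.filter_true_of_mem fun j _ => hall j]
              simp
            rw [this] at hlast
            simp [Fin.last] at hlast
          refine ⟨ht, fun j => hmax _ (Fin.succAbove_ne i j), ?_⟩
          intro k
          have hk := hg k.castSucc
          have hkc : ((k.castSucc.1 : ℝ) + 1) = ((k.1 : ℝ) + 1) := by simp
          rw [hkc] at hk
          have hle : cnt (fun j => u (i.succAbove j)) (((k.1 : ℝ) + 1) * b) ≤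
              cnt u (((k.1 : ℝ) + 1) * b) := by
            rw [cnt_succAbove u i]
            split <;> omega
          have : (k.castSucc).1 = k.1 := rfl
          omega
        · rintro ⟨ht, hlt, hg⟩
          have hmax : ∀ j, j ≠ i → u j < u i := by
            intro j hj
            obtain ⟨j', hj'⟩ := Fin.exists_succAbove_eq hj
            rw [← hj']
            exact hlt j'
          refine ⟨hmax, ?_⟩
          intro k
          have hck : ((k.1 : ℝ) + 1) * b ≤ ((n:ℝ) + 2) * b := by
            have : (k.1 : ℝ) + 1 ≤ (n : ℝ) + 2 := by
              have := k.isLt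
              push_cast
              exact_mod_cast by omega
            exact mul_le_mul_of_nonneg_right this hb
          have hnle : ¬ u i ≤ ((k.1 : ℝ) + 1) * b := not_le.2 (lt_of_le_of_lt hck ht)
          have hcnt : cnt u (((k.1:ℝ) + 1) * b) = cnt (fun j => u (i.succAbove j)) (((k.1:ℝ) + 1) * b) := by
            rw [cnt_succAbove u i, if_neg hnle, zero_add]
          rw [hcnt]
          rcases Nat.lt_or_ge k.1 (n + 1) with hlt' | hge
          · have hk' := hg ⟨k.1, hlt'⟩
            exact hk'
          · have hcle : cnt (fun j => u (i.succAbove j)) (((k.1:ℝ) + 1) * b) ≤ n + 1 := by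
              rw [cnt]
              calc (univ.filter _).card ≤ (univ : Finset (Fin (n+1))).card := Finset.card_filter_le _ _
              _ = n + 1 := by simp
            omega
      rw [hpre, hmp.measure_preimage hBmeas.nullMeasurableSet, Measure.prod_apply hBmeas]
      have hsec : ∀ᵐ t ∂ν, (Measure.pi fun _ : Fin (n + 1) => ν) (Prod.mk t ⁻¹' B) =
          Set.indicator (Set.Ioc (((n:ℝ) + 2) * b) s)
            (fun t => ENNReal.ofReal (t ^ n * (t - ((n:ℝ) + 1) * b))) t := by
        rw [hν]
        filter_upwards [ae_restrict_mem measurableSet_Icc] with t htmem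
        by_cases hc : ((n:ℝ) + 2) * b < t
        · have hset : Prod.mk t ⁻¹' B =
              goodSet (n + 1) b ∩ Set.pi Set.univ (fun _ : Fin (n + 1) => Set.Iio t) := by
            ext v
            simp only [Set.mem_preimage, hBdef, Set.mem_setOf_eq, Set.mem_inter_iff,
              Set.mem_pi, Set.mem_univ, forall_const, Set.mem_Iio]
            tauto
          rw [hset, ← Measure.restrict_apply (measurableSet_goodSet _ _),
            pi_restrict _ _ (fun _ => measurableSet_Iio)]
          have hres : ν.restrict (Set.Iio t) = volume.restrict (Set.Icc (0:ℝ) t) := by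
            rw [hν, Measure.restrict_restrict measurableSet_Iio]
            have heq : Set.Iio t ∩ Set.Icc 0 s = Set.Ico 0 t := by
              ext x
              simp only [Set.mem_inter_iff, Set.mem_Iio, Set.mem_Icc, Set.mem_Ico]
              constructor
              · rintro ⟨h1, h2, _⟩; exact ⟨h2, h1⟩
              · rintro ⟨h1, h2⟩; exact ⟨h2, h1, (h2.le.trans htmem.2)⟩
            rw [heq, Measure.restrict_congr_set Ico_ae_eq_Icc]
          simp only [← hν, hres]
          rw [IH b t hb (le_of_lt (lt_of_le_of_lt (by push_cast; nlinarith) hc))]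
          rw [Set.indicator_of_mem (show t ∈ Set.Ioc (((n:ℝ) + 2) * b) s from ⟨hc, htmem.2⟩)]
        · have hset : Prod.mk t ⁻¹' B = ∅ := by
            ext v
            simp only [Set.mem_preimage, hBdef, Set.mem_setOf_eq, Set.mem_empty_iff_false]
            tauto
          rw [hset]
          rw [Set.indicator_of_notMem (fun hmem => hc hmem.1)]
          simp
      rw [lintegral_congr_ae hsec]
      rw [lintegral_indicator measurableSet_Ioc]
      rw [hν, Measure.restrict_restrict measurableSet_Ioc]
      have heq2 : Set.Ioc (((n:ℝ) + 2) * b) s ∩ Set.Icc 0 s = Set.Ioc (((n:ℝ) + 2) * b) s := by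
        refine Set.inter_eq_left.2 fun x hx => ?_
        exact ⟨le_trans ha0 hx.1.le, hx.2⟩
      rw [heq2]
      have hcont : Continuous fun t : ℝ => t ^ n * (t - ((n:ℝ) + 1) * b) :=
        (continuous_pow n).mul (continuous_id.sub continuous_const)
      have hnn : 0 ≤ᵐ[volume.restrict (Set.Ioc (((n:ℝ) + 2) * b) s)]
          fun t : ℝ => t ^ n * (t - ((n:ℝ) + 1) * b) := by
        filter_upwards [ae_restrict_mem measurableSet_Ioc] with t ht
        simp only [Pi.zero_apply]
        have h1 : (0:ℝ) ≤ t := le_trans ha0 ht.1.le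
        have h2 : ((n:ℝ) + 1) * b ≤ t := le_trans (by nlinarith) ht.1.le
        have := pow_nonneg h1 n
        nlinarith
      rw [← ofReal_integral_eq_lintegral_ofReal (hcont.integrableOn_Ioc) hnn]
      congr 1
      rw [← intervalIntegral.integral_of_le hb2]
      have hder : ∀ t ∈ Set.uIcc (((n:ℝ) + 2) * b) s,
          HasDerivAt (fun t : ℝ => t ^ (n + 2) / ((n:ℝ) + 2) - b * t ^ (n + 1))
            (t ^ n * (t - ((n:ℝ) + 1) * b)) t := by
        intro t _
        have h1 : HasDerivAt (fun t : ℝ => t ^ (n + 2) / ((n:ℝ) + 2))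
            (((n:ℝ) + 2) * t ^ (n + 1) / ((n:ℝ) + 2)) t := by
          have := (hasDerivAt_pow (n + 2) t).div_const ((n:ℝ) + 2)
          refine this.congr_deriv ?_
          push_cast
          ring_nf
        have h2 : HasDerivAt (fun t : ℝ => b * t ^ (n + 1)) (b * (((n:ℝ) + 1) * t ^ n)) t := by
          have := (hasDerivAt_pow (n + 1) t).const_mul b
          refine this.congr_deriv ?_
          push_cast
          ring_nf
        have h3 := h1.sub h2
        refine h3.congr_deriv ?_
        have hne : ((n:ℝ) + 2) ≠ 0 := by positivity
        field_simp
        ring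
      rw [intervalIntegral.integral_eq_sub_of_hasDerivAt hder
        (hcont.intervalIntegrable _ _)]
      have hzero : (((n:ℝ) + 2) * b) ^ (n + 2) / ((n:ℝ) + 2) - b * (((n:ℝ) + 2) * b) ^ (n + 1) = 0 := by
        have hne : ((n:ℝ) + 2) ≠ 0 := by positivity
        field_simp
        ring
      rw [hzero, sub_zero]
    -- put it together
    rw [hGA, measure_iUnion hAdisj hAmeas, tsum_fintype]
    simp only [hAi]
    rw [Finset.sum_const, Finset.card_univ, Fintype.card_fin, nsmul_eq_mul]
    rw [← ENNReal.ofReal_natCast (n + 2), ← ENNReal.ofReal_mul (by positivity)]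
    congr 1
    have hne : ((n:ℝ) + 2) ≠ 0 := by positivity
    push_cast
    field_simp
    ring

lemma cnt_comp_perm {n : ℕ} (u : Fin n → ℝ) (σ : Equiv.Perm (Fin n)) (c : ℝ) :
    cnt (u ∘ σ) c = cnt u c := by
  unfold cnt
  apply Finset.card_bij (fun j _ => σ j)
  · intro a ha; simp only [mem_filter, mem_univ, true_and] at ha ⊢; exact ha
  · intro a _ b _ h; exact σ.injective h
  · intro b hb
    refine ⟨σ.symm b, ?_, by simp⟩
    simp only [mem_filter, mem_univ, true_and, Function.comp_apply, Equiv.apply_symm_apply] at hb ⊢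
    exact hb

lemma cnt_monotone_le_iff {n : ℕ} {g : Fin n → ℝ} (hg : Monotone g) (i : Fin n) (c : ℝ) :
    g i ≤ c ↔ i.1 + 1 ≤ cnt g c := by
  constructor
  · intro h
    have hsub : Finset.Iic i ⊆ univ.filter fun j => g j ≤ c := by
      intro j hj
      simp only [Finset.mem_Iic] at hj
      simp only [mem_filter, mem_univ, true_and]
      exact (hg hj).trans h
    have := Finset.card_le_card hsub
    rwa [Fin.card_Iic] at this
  · intro h
    by_contra hc
    push_neg at hc
    have hsub : (univ.filter fun j => g j ≤ c) ⊆ Finset.Iio i := by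
      intro j hj
      simp only [mem_filter, mem_univ, true_and] at hj
      simp only [Finset.mem_Iio]
      by_contra hij
      push_neg at hij
      exact absurd (hj.trans_lt hc) (not_lt.2 (hg hij))
    have := Finset.card_le_card hsub
    rw [Fin.card_Iio] at this
    unfold cnt at h
    omega

lemma sortAsc_le_iff {K : ℕ} (p : Fin K → ℝ) (i : Fin K) (c : ℝ) :
    sortAsc p i ≤ c ↔ i.1 + 1 ≤ cnt p c := by
  have h1 : cnt (p ∘ Tuple.sort p) c = cnt p c := cnt_comp_perm p _ c
  rw [← h1]
  exact cnt_monotone_le_iff (Tuple.monotone_sort p) i c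

lemma simes_le_iff {K : ℕ} (hK : 0 < K) (p : Fin K → ℝ) (α : ℝ) :
    simes K p ≤ α ↔ p ∉ goodSet K (α / K) := by
  haveI : Nonempty (Fin K) := ⟨⟨0, hK⟩⟩
  have hKpos : (0:ℝ) < K := by exact_mod_cast hK
  have key : ∀ i : Fin K, ((K:ℝ) / (i.1 + 1) * sortAsc p i ≤ α ↔
      i.1 + 1 ≤ cnt p ((i.1 + 1) * (α / K))) := by
    intro i
    have hipos : (0:ℝ) < (i.1:ℝ) + 1 := by positivity
    rw [← sortAsc_le_iff]
    rw [div_mul_eq_mul_div, div_le_iff₀ hipos, ← mul_div_assoc, le_div_iff₀ hKpos]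
    constructor <;> intro h <;> nlinarith
  have hinf : simes K p ≤ α ↔ ∃ i : Fin K, (K:ℝ) / (i.1 + 1) * sortAsc p i ≤ α := by
    constructor
    · intro h
      obtain ⟨i, hi⟩ := exists_eq_ciInf_of_finite
        (f := fun i : Fin K => (K:ℝ) / (i.1 + 1) * sortAsc p i)
      exact ⟨i, by rw [simes] at h; rw [hi]; exact h⟩
    · rintro ⟨i, hi⟩
      exact le_trans (ciInf_le (Set.Finite.bddBelow (Set.finite_range _)) i) hi
  rw [hinf]
  constructor
  · rintro ⟨i, hi⟩ hgood
    have := hgood i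
    rw [key i] at hi
    omega
  · intro h
    rw [goodSet] at h
    simp only [Set.mem_setOf_eq, not_forall, not_le] at h
    obtain ⟨i, hi⟩ := h
    exact ⟨i, (key i).2 (by omega)⟩

end SimesAux
end

open SimesAux in
/-- If `P_1, …, P_K` are i.i.d. uniform on `[0,1]`, the Simes statistic
`S_K(P) = min_k (K/k) P_(k)` is itself uniform on `[0,1]`. -/
theorem simes_uniform_iid
    {Ω : Type*} [MeasurableSpace Ω] (μ : Measure Ω) [IsProbabilityMeasure μ]
    {K : ℕ} (hK : 0 < K)
    (P : Fin K → Ω → ℝ) (hP : ∀ k, Measurable (P k))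
    (h_indep : iIndepFun P μ)
    (h_unif : ∀ k, μ.map (P k) = volume.restrict (Set.Icc (0 : ℝ) 1)) :
    ∀ α ∈ Set.Icc (0 : ℝ) 1,
      μ {ω | simes K (fun j => P j ω) ≤ α} = ENNReal.ofReal α := by
  intro α hα
  obtain ⟨n, rfl⟩ : ∃ n, K = n + 1 := ⟨K - 1, (Nat.succ_pred_eq_of_pos hK).symm⟩
  set T : Ω → (Fin (n+1) → ℝ) := fun ω j => P j ω with hTdef
  have hTmeas : Measurable T := measurable_pi_iff.2 fun j => hP j
  have hmap : μ.map T = Measure.pi (fun _ : Fin (n+1) => volume.restrict (Set.Icc (0:ℝ) 1)) := by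
    refine (Measure.pi_eq fun s hs => ?_).symm
    rw [Measure.map_apply hTmeas (MeasurableSet.univ_pi hs)]
    have hpre : T ⁻¹' (Set.pi Set.univ s) = ⋂ i ∈ Finset.univ, P i ⁻¹' s i := by
      ext ω
      simp [hTdef, Set.mem_pi]
    rw [hpre, (iIndepFun_iff_measure_inter_preimage_eq_mul.1 h_indep) Finset.univ
      (fun i _ => hs i)]
    refine Finset.prod_congr rfl fun i _ => ?_
    rw [← Measure.map_apply (hP i) (hs i), h_unif i]
  haveI : IsProbabilityMeasure (volume.restrict (Set.Icc (0:ℝ) 1)) :=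
    ⟨by rw [Measure.restrict_apply_univ]; simp [Real.volume_Icc]⟩
  set b : ℝ := α / ((n+1 : ℕ) : ℝ) with hbdef
  have hcast : ((n:ℝ) + 1) = ((n+1 : ℕ) : ℝ) := by push_cast; ring
  have hb : 0 ≤ b := div_nonneg hα.1 (by positivity)
  have hba : ((n:ℝ) + 1) * b = α := by
    rw [hbdef, hcast]
    exact mul_div_cancel₀ α (by positivity)
  have hcore := core n b 1 hb (by rw [hba]; exact hα.2)
  rw [one_pow, one_mul, hba] at hcore
  have hEset : {ω | simes (n+1) (fun j => P j ω) ≤ α} =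
      T ⁻¹' (goodSet (n+1) b)ᶜ := by
    ext ω
    simp only [Set.mem_setOf_eq, Set.mem_preimage, Set.mem_compl_iff]
    exact simes_le_iff hK (fun j => P j ω) α
  rw [hEset, ← Measure.map_apply hTmeas (measurableSet_goodSet _ _).compl, hmap,
    measure_compl (measurableSet_goodSet _ _) (measure_ne_top _ _), hcore, measure_univ]
  rw [← ENNReal.ofReal_one, ← ENNReal.ofReal_sub 1 (by linarith [hα.2] : (0:ℝ) ≤ 1 - α)]
  norm_num
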